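/- Let 1 < α < 2, b > 0, let M ≥ 2 be an integer and set h = b/M. Then for every complex vector u ∈ ℂ^{M−1}, with the discrete inner product (u,v) = h·∑_{i=1}^{M−1} u_i · conj(v_i) and ‖u‖² = (u,u), one has −(1/h^α) · Re(A_α u, u) ≥ −(2/(b^α · Γ(1−α))) · ‖u‖², and the right-hand side is strictly positive whenever u ≠ 0 (since Γ(1−α) < 0). -/

import Mathlib

/-- Grünwald–Letnikov coefficient `g_k^α = (-1)^k * binom(α,k)`. -/
noncomputable def gl (a : ℝ) (k : ℕ) : ℝ :=
  (-1 : ℝ) ^ k * (∏ j ∈ Finset.range k, (a - j)) / (Nat.factorial k : ℝ)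

/-- Shifted Grünwald weights. -/
noncomputable def glw (a : ℝ) : ℕ → ℝ
  | 0 => a / 2 * gl a 0
  | (k+1) => a / 2 * gl a (k+1) + (2 - a) / 2 * gl a k

/-- Second-order Lubich coefficients `l_m^{2,γ}`. -/
noncomputable def lub2 (g : ℝ) (m : ℕ) : ℝ :=
  (3/2 : ℝ) ^ g * ∑ k ∈ Finset.range (m+1), (1/3 : ℝ) ^ k * gl g k * gl g (m - k)

/-- The Toeplitz matrix `B_α` of size `(M-1) × (M-1)`. -/
noncomputable def Bmat (a : ℝ) (M : ℕ) : Matrix (Fin (M-1)) (Fin (M-1)) ℝ :=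
  fun i j => if (j : ℕ) ≤ (i : ℕ) + 1 then glw a ((i : ℕ) + 1 - (j : ℕ)) else 0

/-- The symmetric matrix `A_α = B_α + B_αᵀ`. -/
noncomputable def Amat (a : ℝ) (M : ℕ) : Matrix (Fin (M-1)) (Fin (M-1)) ℝ :=
  Bmat a M + (Bmat a M).transpose

/-! ### Auxiliary definitions and lemmas -/

/-- `Qp a t = ∏_{j=1}^{t} (j - a)`. -/
noncomputable def Qp (a : ℝ) (t : ℕ) : ℝ := ∏ j ∈ Finset.range t, ((j:ℝ) + 1 - a)

/-- Partial sums of the shifted Grünwald weights. -/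
noncomputable def Sp (a : ℝ) (m : ℕ) : ℝ := ∑ k ∈ Finset.range (m+1), glw a k

lemma gl_zero (a : ℝ) : gl a 0 = 1 := by simp [gl]

lemma gl_succ (a : ℝ) (k : ℕ) :
    gl a (k+1) = gl a k * (((k:ℝ) - a) / ((k:ℝ)+1)) := by
  have hf : ((k.factorial : ℝ)) ≠ 0 := by exact_mod_cast k.factorial_ne_zero
  have hk : ((k:ℝ)+1) ≠ 0 := by positivity
  unfold gl
  rw [Finset.prod_range_succ, Nat.factorial_succ]
  push_cast
  field_simp
  ring

lemma Qp_succ (a : ℝ) (n : ℕ) : Qp a (n+1) = Qp a n * ((n:ℝ) + 1 - a) := by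
  unfold Qp; rw [Finset.prod_range_succ]

lemma glF (a : ℝ) : ∀ n : ℕ, gl a (n+1) = -a * Qp a n / ((n+1).factorial : ℝ) := by
  intro n
  induction n with
  | zero => simp [gl_succ, gl_zero, Qp]
  | succ n ih =>
      rw [gl_succ, ih, Qp_succ]
      have hf : (((n+1).factorial : ℝ)) ≠ 0 := by exact_mod_cast (n+1).factorial_ne_zero
      have hk : ((n:ℝ)+1+1) ≠ 0 := by positivity
      have hfs : (((n+1+1).factorial : ℝ)) = ((n:ℝ)+2) * ((n+1).factorial : ℝ) := by
        rw [Nat.factorial_succ]; push_cast; ring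
      rw [hfs]
      push_cast
      field_simp
      ring

lemma Qp_neg {a : ℝ} (ha1 : 1 < a) (ha2 : a < 2) : ∀ n : ℕ, 1 ≤ n → Qp a n < 0 := by
  intro n hn
  induction n with
  | zero => omega
  | succ n ih =>
      rcases Nat.eq_or_lt_of_le hn with h1 | h1
      · have : Qp a 1 = 1 - a := by simp [Qp]
        rw [← h1] at *
        rw [this]; linarith
      · have hn1 : 1 ≤ n := by omega
        have := ih hn1
        rw [Qp_succ]
        have : ((n:ℝ) + 1 - a) > 0 := by
          have : (1:ℝ) ≤ (n:ℝ) := by exact_mod_cast hn1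
          linarith
        nlinarith [ih hn1]

lemma gl_pos {a : ℝ} (ha1 : 1 < a) (ha2 : a < 2) (n : ℕ) : 0 < gl a (n+2) := by
  rw [glF]
  have hQ : Qp a (n+1) < 0 := Qp_neg ha1 ha2 (n+1) (by omega)
  have hf : (0:ℝ) < ((n+2).factorial : ℝ) := by exact_mod_cast (n+2).factorial_pos
  have : 0 < -a * Qp a (n+1) := by nlinarith
  positivity

lemma glw_nonneg {a : ℝ} (ha1 : 1 < a) (ha2 : a < 2) (k : ℕ) (hk : 3 ≤ k) : 0 ≤ glw a k := by
  obtain ⟨n, rfl⟩ : ∃ n, k = n + 3 := ⟨k - 3, by omega⟩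
  show 0 ≤ a / 2 * gl a (n+3) + (2 - a) / 2 * gl a (n+2)
  have h1 : 0 < gl a (n+1+2) := gl_pos ha1 ha2 (n+1)
  have h2 : 0 < gl a (n+2) := gl_pos ha1 ha2 n
  have : gl a (n+1+2) = gl a (n+3) := by norm_num
  nlinarith

lemma glw02_nonneg {a : ℝ} (ha1 : 1 < a) (ha2 : a < 2) : 0 ≤ glw a 0 + glw a 2 := by
  have h0 : glw a 0 = a / 2 * gl a 0 := rfl
  have h2 : glw a 2 = a / 2 * gl a 2 + (2 - a) / 2 * gl a 1 := rfl
  have hgl1 : gl a 1 = -a := by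
    rw [show gl a 1 = gl a (0+1) from rfl, gl_succ, gl_zero]; push_cast; ring
  have hgl2 : gl a 2 = a * (a - 1) / 2 := by
    rw [show gl a 2 = gl a (1+1) from rfl, gl_succ, hgl1]; push_cast; ring
  rw [h0, h2, hgl1, hgl2, gl_zero]
  nlinarith [mul_pos (mul_pos (by linarith : (0:ℝ) < a) (by linarith : (0:ℝ) < a - 1))
    (by linarith : (0:ℝ) < a + 2)]

lemma glw0_nonneg {a : ℝ} (ha1 : 1 < a) : 0 ≤ glw a 0 := by
  show 0 ≤ a / 2 * gl a 0
  rw [gl_zero]; nlinarith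

lemma SpF {a : ℝ} : ∀ n : ℕ,
    Sp a (n+1) = Qp a n * (2*((n:ℝ)+1) - a^2) / (2 * ((n+1).factorial : ℝ)) := by
  intro n
  induction n with
  | zero =>
      show Sp a 1 = _
      have : Sp a 1 = glw a 0 + glw a 1 := by
        simp [Sp, Finset.sum_range_succ]
      rw [this]
      show a / 2 * gl a 0 + (a / 2 * gl a 1 + (2 - a) / 2 * gl a 0) = _
      rw [gl_zero, show gl a 1 = gl a (0+1) from rfl, gl_succ, gl_zero]
      simp [Qp, Nat.factorial]
      ring
  | succ n ih =>
      have hstep : Sp a (n+2) = Sp a (n+1) + glw a (n+2) := by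
        simp [Sp, Finset.sum_range_succ]
      have hglw : glw a (n+2) = a / 2 * gl a (n+2) + (2 - a) / 2 * gl a (n+1) := rfl
      rw [hstep, ih, hglw, show gl a (n+2) = gl a ((n+1)+1) from rfl, glF, glF, Qp_succ]
      have hf : (((n+1).factorial : ℝ)) ≠ 0 := by exact_mod_cast (n+1).factorial_ne_zero
      have hfs : (((n+1+1).factorial : ℝ)) = ((n:ℝ)+2) * ((n+1).factorial : ℝ) := by
        rw [Nat.factorial_succ]; push_cast; ring
      rw [hfs]
      push_cast
      field_simp
      ring

lemma GammaQ {a : ℝ} (ha1 : 1 < a) (ha2 : a < 2) :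
    ∀ n : ℕ, Real.Gamma ((n:ℝ) + 1 - a) = Qp a n * Real.Gamma (1 - a) := by
  intro n
  induction n with
  | zero => simp [Qp]
  | succ n ih =>
      have hne : ((n:ℝ) + 1 - a) ≠ 0 := by
        rcases Nat.eq_zero_or_pos n with h | h
        · subst h; simp; intro hc; linarith [hc]
        · have : (1:ℝ) ≤ (n:ℝ) := by exact_mod_cast h
          intro hc; linarith
      have := Real.Gamma_add_one hne
      have harg : ((n:ℝ) + 1 - a) + 1 = ((n+1:ℕ):ℝ) + 1 - a := by push_cast; ring
      rw [harg] at this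
      rw [this, ih, Qp_succ]
      ring

lemma Gamma_interp {x s : ℝ} (hx : 0 < x) (hs0 : 0 ≤ s) (hs1 : s ≤ 1) :
    Real.Gamma (x + s) ≤ Real.Gamma x * x ^ s := by
  have hx1 : (0:ℝ) < x + 1 := by linarith
  have hG : 0 < Real.Gamma x := Real.Gamma_pos_of_pos hx
  have hG1 : 0 < Real.Gamma (x+1) := Real.Gamma_pos_of_pos hx1
  have hGxs : 0 < Real.Gamma (x+s) := Real.Gamma_pos_of_pos (by linarith)
  have hconv := Real.convexOn_log_Gamma.2 (Set.mem_Ioi.2 hx) (Set.mem_Ioi.2 hx1)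
    (by linarith : (0:ℝ) ≤ 1 - s) hs0 (by ring)
  simp only [smul_eq_mul, Function.comp_apply] at hconv
  have hpt : (1 - s) * x + s * (x + 1) = x + s := by ring
  rw [hpt] at hconv
  have hGadd : Real.Gamma (x + 1) = x * Real.Gamma x := Real.Gamma_add_one (ne_of_gt hx)
  have hlog : Real.log (Real.Gamma (x+1)) = Real.log x + Real.log (Real.Gamma x) := by
    rw [hGadd, Real.log_mul (ne_of_gt hx) (ne_of_gt hG)]
  rw [hlog] at hconv
  have h2 : Real.log (Real.Gamma (x+s)) ≤ Real.log (Real.Gamma x) + s * Real.log x := by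
    nlinarith
  calc Real.Gamma (x+s) = Real.exp (Real.log (Real.Gamma (x+s))) := by
        rw [Real.exp_log hGxs]
    _ ≤ Real.exp (Real.log (Real.Gamma x) + s * Real.log x) := Real.exp_le_exp.2 h2
    _ = Real.Gamma x * x ^ s := by
        rw [Real.exp_add, Real.exp_log hG, Real.rpow_def_of_pos hx, mul_comm (Real.log x) s]

lemma key1 {a : ℝ} (ha1 : 1 < a) (ha2 : a < 2) (m : ℕ) (hm : 2 ≤ m) :
    2 * (m.factorial : ℝ) ≤ Real.Gamma ((m:ℝ) - a) * (2*(m:ℝ) - a^2) * (m:ℝ)^a := by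
  have hm2 : (2:ℝ) ≤ (m:ℝ) := by exact_mod_cast hm
  have hma : 0 < (m:ℝ) - a := by linarith
  have hm0 : (0:ℝ) < m := by linarith
  have hx : (0:ℝ) < (m:ℝ) + 1 - a := by linarith
  have h1 : Real.Gamma ((m:ℝ)) ≤ Real.Gamma ((m:ℝ)+1-a) * ((m:ℝ)+1-a) ^ (a-1) := by
    have := Gamma_interp hx (by linarith : (0:ℝ) ≤ a - 1) (by linarith : a - 1 ≤ 1)
    have harg : (m:ℝ) + 1 - a + (a - 1) = (m:ℝ) := by ring
    rwa [harg] at this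
  have h2 : Real.Gamma ((m:ℝ)+1-a) = ((m:ℝ)-a) * Real.Gamma ((m:ℝ)-a) := by
    have := Real.Gamma_add_one (ne_of_gt hma)
    have harg : (m:ℝ) - a + 1 = (m:ℝ) + 1 - a := by ring
    rwa [harg] at this
  have h3 : ((m:ℝ)+1-a) ^ (a-1) ≤ (m:ℝ) ^ (a-1) :=
    Real.rpow_le_rpow (le_of_lt hx) (by linarith) (by linarith)
  have hGma : 0 < Real.Gamma ((m:ℝ)-a) := Real.Gamma_pos_of_pos hma
  have hfact : (m.factorial : ℝ) = (m:ℝ) * Real.Gamma ((m:ℝ)) := by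
    have hf := Real.Gamma_nat_eq_factorial m
    have := Real.Gamma_add_one (ne_of_gt hm0)
    rw [this] at hf
    linarith [hf]
  have hrp : ((m:ℝ)) * (m:ℝ) ^ (a-1) = (m:ℝ) ^ a := by
    have : (m:ℝ)^a = (m:ℝ)^(1+(a-1)) := by norm_num
    rw [this, Real.rpow_add hm0, Real.rpow_one]
  have hAnn : (0:ℝ) < (m:ℝ)^(a-1) := Real.rpow_pos_of_pos hm0 _
  calc 2 * (m.factorial : ℝ) = 2*(m:ℝ) * Real.Gamma ((m:ℝ)) := by rw [hfact]; ring
    _ ≤ 2*(m:ℝ) * (Real.Gamma ((m:ℝ)+1-a) * ((m:ℝ)+1-a)^(a-1)) :=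
        mul_le_mul_of_nonneg_left h1 (by linarith)
    _ = 2*(m:ℝ) * (((m:ℝ)-a) * Real.Gamma ((m:ℝ)-a) * ((m:ℝ)+1-a)^(a-1)) := by rw [h2]
    _ ≤ 2*(m:ℝ) * (((m:ℝ)-a) * Real.Gamma ((m:ℝ)-a) * ((m:ℝ))^(a-1)) := by
        apply mul_le_mul_of_nonneg_left _ (by linarith : (0:ℝ) ≤ 2*(m:ℝ))
        exact mul_le_mul_of_nonneg_left h3 (by positivity)
    _ = (2*((m:ℝ)-a)) * Real.Gamma ((m:ℝ)-a) * ((m:ℝ) * (m:ℝ)^(a-1)) := by ring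
    _ ≤ (2*(m:ℝ) - a^2) * Real.Gamma ((m:ℝ)-a) * ((m:ℝ) * (m:ℝ)^(a-1)) := by
        apply mul_le_mul_of_nonneg_right _ (by positivity)
        apply mul_le_mul_of_nonneg_right _ hGma.le
        nlinarith
    _ = Real.Gamma ((m:ℝ)-a) * (2*(m:ℝ) - a^2) * (m:ℝ)^a := by rw [hrp]; ring

lemma keyrow {a : ℝ} (ha1 : 1 < a) (ha2 : a < 2) (M : ℕ) (hM : 2 ≤ M)
    (t : ℕ) (ht1 : 1 ≤ t) (ht2 : t + 1 ≤ M) :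
    ((M:ℝ))^(-a) ≤ Real.Gamma (1-a) * (Sp a t - (if t = 1 then glw a 0 else 0)) := by
  set G := Real.Gamma (1-a) with hGdef
  have h1a : (1:ℝ) - a ≠ 0 := by intro hc; linarith
  have hG2 : Real.Gamma (2-a) = (1-a) * G := by
    have := Real.Gamma_add_one h1a
    have harg : (1:ℝ) - a + 1 = 2 - a := by ring
    rwa [harg] at this
  have h2a : (0:ℝ) < 2 - a := by linarith
  have hG2pos : 0 < Real.Gamma (2-a) := Real.Gamma_pos_of_pos h2a
  have hM2 : (2:ℝ) ≤ (M:ℝ) := by exact_mod_cast hM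
  rcases eq_or_lt_of_le ht1 with h1 | h1
  · -- t = 1
    rw [← h1, if_pos rfl]
    have hsp : Sp a 1 - glw a 0 = glw a 1 := by
      simp [Sp, Finset.sum_range_succ]
    rw [hsp]
    have hglw1 : glw a 1 = (2 - a - a^2)/2 := by
      show a/2 * gl a 1 + (2-a)/2 * gl a 0 = _
      rw [show gl a 1 = gl a (0+1) from rfl, gl_succ, gl_zero]
      push_cast
      ring
    have e1 : G * glw a 1 = Real.Gamma (2-a) * (a+2) / 2 := by
      rw [hglw1, hG2]; ring
    have hG3 : Real.Gamma (3-a) = (2-a) * Real.Gamma (2-a) := by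
      have := Real.Gamma_add_one (ne_of_gt h2a)
      have harg : (2:ℝ) - a + 1 = 3 - a := by ring
      rwa [harg] at this
    have hint := Gamma_interp (x := 3-a) (s := a-1) (by linarith) (by linarith) (by linarith)
    have harg2 : (3:ℝ) - a + (a - 1) = 2 := by ring
    rw [harg2, Real.Gamma_two] at hint
    have hG3pos : 0 < Real.Gamma (3-a) := Real.Gamma_pos_of_pos (by linarith)
    have hp1 : ((3:ℝ)-a)^(a-1) ≤ (2:ℝ)^(a-1) :=
      Real.rpow_le_rpow (by linarith) (by linarith) (by linarith)
    set p := (2:ℝ)^(a-1) with hp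
    set q := (2:ℝ)^(-a) with hq
    have hppos : 0 < p := Real.rpow_pos_of_pos two_pos _
    have hqpos : 0 < q := Real.rpow_pos_of_pos two_pos _
    have hpq : p * q = 1/2 := by
      rw [hp, hq, ← Real.rpow_add two_pos]
      norm_num
      rw [show a - 1 + -a = -1 by ring, Real.rpow_neg_one]
      norm_num
    have h3p : 1 ≤ Real.Gamma (3-a) * p := by
      calc (1:ℝ) ≤ Real.Gamma (3-a) * ((3:ℝ)-a)^(a-1) := hint
        _ ≤ Real.Gamma (3-a) * p := mul_le_mul_of_nonneg_left hp1 hG3pos.le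
    have h2q : 2 * q ≤ Real.Gamma (3-a) := by
      nlinarith [mul_le_mul_of_nonneg_right h3p (le_of_lt hqpos)]
    have hMq : ((M:ℝ))^(-a) ≤ q := by
      rw [hq]
      exact Real.rpow_le_rpow_of_nonpos two_pos hM2 (by linarith)
    have hfin : q ≤ Real.Gamma (2-a) * (a+2) / 2 := by
      rw [hG3] at h2q
      nlinarith [hG2pos]
    rw [e1]
    linarith
  · -- t ≥ 2
    rw [if_neg (by omega), sub_zero]
    obtain ⟨s, rfl⟩ : ∃ s, t = s + 1 := ⟨t - 1, by omega⟩
    have hs1 : 1 ≤ s := by omega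
    have hQ : Real.Gamma (((s:ℕ):ℝ)+1-a) = Qp a s * G := GammaQ ha1 ha2 s
    have hGSp : G * Sp a (s+1)
        = Real.Gamma (((s:ℕ):ℝ)+1-a) * (2*((s:ℝ)+1) - a^2) / (2 * ((s+1).factorial : ℝ)) := by
      rw [SpF s, hQ]; ring
    have hk := key1 ha1 ha2 (s+1) (by omega)
    have hcast : (((s+1:ℕ)):ℝ) = (s:ℝ) + 1 := by push_cast; ring
    rw [hcast] at hk
    have hargk : (s:ℝ) + 1 - a = ((s:ℕ):ℝ)+1-a := by norm_num
    rw [hargk] at hk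
    have hspos : (0:ℝ) < (s:ℝ)+1 := by positivity
    have htpow : ((s:ℝ)+1)^(-a) * ((s:ℝ)+1)^a = 1 := by
      rw [← Real.rpow_add hspos]; norm_num
    have hfpos : (0:ℝ) < ((s+1).factorial : ℝ) := by exact_mod_cast (s+1).factorial_pos
    have htneg : (0:ℝ) < ((s:ℝ)+1)^(-a) := Real.rpow_pos_of_pos hspos _
    have ht1' : ((s:ℝ)+1)^(-a) ≤ G * Sp a (s+1) := by
      rw [hGSp, le_div_iff₀ (by positivity)]
      calc ((s:ℝ)+1)^(-a) * (2 * ((s+1).factorial : ℝ))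
          ≤ ((s:ℝ)+1)^(-a) * (Real.Gamma (((s:ℕ):ℝ)+1-a) * (2*((s:ℝ)+1) - a^2) * ((s:ℝ)+1)^a) :=
            mul_le_mul_of_nonneg_left hk htneg.le
        _ = Real.Gamma (((s:ℕ):ℝ)+1-a) * (2*((s:ℝ)+1) - a^2) * (((s:ℝ)+1)^(-a) * ((s:ℝ)+1)^a) := by
            ring
        _ = Real.Gamma (((s:ℕ):ℝ)+1-a) * (2*((s:ℝ)+1) - a^2) := by rw [htpow, mul_one]
    have hMt : ((M:ℝ))^(-a) ≤ ((s:ℝ)+1)^(-a) := by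
      apply Real.rpow_le_rpow_of_nonpos hspos _ (by linarith)
      have : ((s:ℕ):ℝ) + 1 + 1 ≤ (M:ℝ) := by exact_mod_cast ht2
      linarith
    linarith

lemma rowShape (a : ℝ) (n t : ℕ) (ht1 : 1 ≤ t) (ht2 : t ≤ n+1) :
    ∑ j ∈ Finset.range (n+1), (if j ≤ t then glw a (t - j) else 0)
      = Sp a t - (if t = n+1 then glw a 0 else 0) := by
  rcases eq_or_lt_of_le ht2 with heq | hlt
  · subst heq
    rw [if_pos rfl]
    have hall : ∀ j ∈ Finset.range (n+1), (if j ≤ n+1 then glw a (n+1-j) else 0)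
        = (fun k => glw a (k+1)) (n + 1 - 1 - j) := by
      intro j hj
      have hj' : j < n + 1 := Finset.mem_range.mp hj
      have h2 : (fun k => glw a (k+1)) (n+1-1-j) = glw a (n+1-j) := by
        show glw a ((n-j)+1) = glw a (n+1-j)
        congr 1
        omega
      rw [if_pos (by omega), h2]
    rw [Finset.sum_congr rfl hall, Finset.sum_range_reflect (fun k => glw a (k+1)) (n+1)]
    have : Sp a (n+1) = (∑ j ∈ Finset.range (n+1), glw a (j+1)) + glw a 0 :=
      Finset.sum_range_succ' _ _
    rw [this]
    ring
  · have hne : ¬ (t = n+1) := by omega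
    rw [if_neg hne, sub_zero]
    have hsub : Finset.range (t+1) ⊆ Finset.range (n+1) :=
      Finset.range_subset_range.mpr (by omega)
    rw [← Finset.sum_subset hsub (by
      intro x hx hnx
      have h1 : x < n+1 := Finset.mem_range.mp hx
      have h2 : ¬ (x < t+1) := fun hc => hnx (Finset.mem_range.mpr hc)
      rw [if_neg (by omega)])]
    have hall : ∀ j ∈ Finset.range (t+1), (if j ≤ t then glw a (t-j) else 0)
        = (fun k => glw a k) (t + 1 - 1 - j) := by
      intro j hj
      have hj' : j < t + 1 := Finset.mem_range.mp hj
      have h2 : (fun k => glw a k) (t+1-1-j) = glw a (t-j) := rfl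
      rw [if_pos (by omega), h2]
    rw [Finset.sum_congr rfl hall, Finset.sum_range_reflect (fun k => glw a k) (t+1)]
    rfl

lemma colShape (a : ℝ) (n : ℕ) (i : ℕ) (hi : i ≤ n) :
    ∑ j ∈ Finset.range (n+1), (if i ≤ j+1 then glw a (j+1-i) else 0)
      = ∑ j ∈ Finset.range (n+1), (if j ≤ n+1-i then glw a ((n+1-i) - j) else 0) := by
  rw [← Finset.sum_range_reflect (fun j => if i ≤ j+1 then glw a (j+1-i) else 0) (n+1)]
  apply Finset.sum_congr rfl
  intro j hj
  have hj' : j < n + 1 := Finset.mem_range.mp hj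
  by_cases hc : j ≤ n + 1 - i
  · rw [if_pos (by omega), if_pos hc]
    congr 1
    omega
  · rw [if_neg (by omega), if_neg hc]

lemma rowB (a : ℝ) (n : ℕ) (i : Fin (n+1)) :
    ∑ j, Bmat a (n+2) i j
      = ∑ j ∈ Finset.range (n+1), (if j ≤ (i:ℕ)+1 then glw a ((i:ℕ)+1-j) else 0) := by
  rw [← Fin.sum_univ_eq_sum_range (fun j => if j ≤ (i:ℕ)+1 then glw a ((i:ℕ)+1-j) else 0) (n+1)]
  rfl

lemma colB (a : ℝ) (n : ℕ) (i : Fin (n+1)) :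
    ∑ j, Bmat a (n+2) j i
      = ∑ j ∈ Finset.range (n+1), (if (i:ℕ) ≤ j+1 then glw a (j+1-(i:ℕ)) else 0) := by
  rw [← Fin.sum_univ_eq_sum_range (fun j => if (i:ℕ) ≤ j+1 then glw a (j+1-(i:ℕ)) else 0) (n+1)]
  rfl

lemma rowsumA (a : ℝ) (n : ℕ) (i : Fin (n+1)) :
    ∑ j, Amat a (n+2) i j
      = (Sp a ((i:ℕ)+1) - (if (i:ℕ)+1 = 1 then glw a 0 else 0))
        + (Sp a (n+1-(i:ℕ)) - (if n+1-(i:ℕ) = 1 then glw a 0 else 0)) := by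
  have hi : (i:ℕ) ≤ n := by omega
  have hsplit : ∑ j, Amat a (n+2) i j
      = (∑ j, Bmat a (n+2) i j) + (∑ j, Bmat a (n+2) j i) := by
    rw [← Finset.sum_add_distrib]
    rfl
  rw [hsplit, rowB, colB, colShape a n (i:ℕ) hi,
    rowShape a n ((i:ℕ)+1) (by omega) (by omega),
    rowShape a n (n+1-(i:ℕ)) (by omega) (by omega)]
  split_ifs <;> first | ring1 | (exfalso; omega)

lemma qf_bound {n : ℕ} (C : Matrix (Fin n) (Fin n) ℝ) (c : ℝ)
    (hsym : ∀ i j, C i j = C j i) (hoff : ∀ i j, i ≠ j → 0 ≤ C i j)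
    (hrow : ∀ i, ∑ j, C i j ≤ c) (v : Fin n → ℝ) :
    ∑ i, ∑ j, C i j * v i * v j ≤ c * ∑ i, v i ^ 2 := by
  have expand : ∑ i, ∑ j, C i j * (v i - v j)^2
      = (∑ i, ∑ j, C i j * v i^2) + (∑ i, ∑ j, C i j * v j^2)
        - 2 * ∑ i, ∑ j, C i j * v i * v j := by
    rw [← Finset.sum_add_distrib, Finset.mul_sum, ← Finset.sum_sub_distrib]
    apply Finset.sum_congr rfl; intro i _
    rw [← Finset.sum_add_distrib, Finset.mul_sum, ← Finset.sum_sub_distrib]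
    apply Finset.sum_congr rfl; intro j _
    ring
  have hA2 : (∑ i, ∑ j, C i j * v j^2) = ∑ i, ∑ j, C i j * v i^2 := by
    rw [Finset.sum_comm]
    apply Finset.sum_congr rfl; intro j _
    apply Finset.sum_congr rfl; intro i _
    rw [hsym]
  have hpos : 0 ≤ ∑ i, ∑ j, C i j * (v i - v j)^2 := by
    apply Finset.sum_nonneg; intro i _
    apply Finset.sum_nonneg; intro j _
    rcases eq_or_ne i j with rfl | hne
    · simp
    · exact mul_nonneg (hoff i j hne) (sq_nonneg _)
  have hA1 : (∑ i, ∑ j, C i j * v i^2) ≤ c * ∑ i, v i ^ 2 := by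
    rw [Finset.mul_sum]
    apply Finset.sum_le_sum; intro i _
    rw [← Finset.sum_mul]
    exact mul_le_mul_of_nonneg_right (hrow i) (sq_nonneg _)
  nlinarith [hA1, hpos, hA2, expand]

theorem stmt17 (α b : ℝ) (hα1 : 1 < α) (hα2 : α < 2) (hb : 0 < b)
    (M : ℕ) (hM : 2 ≤ M) (h : ℝ) (hh : h = b / M)
    (u : Fin (M-1) → ℂ) :
    -(2 / (b ^ α * Real.Gamma (1 - α))) * (h * ∑ i, ‖u i‖ ^ 2) ≤
      -(1 / h ^ α) *
        ((h : ℂ) * ∑ i,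
          (Matrix.mulVec ((Amat α M).map Complex.ofReal) u) i * (starRingEnd ℂ) (u i)).re ∧
    (u ≠ 0 → 0 < -(2 / (b ^ α * Real.Gamma (1 - α))) * (h * ∑ i, ‖u i‖ ^ 2)) := by
  obtain ⟨n, rfl⟩ : ∃ n, M = n + 2 := ⟨M - 2, by omega⟩
  set G := Real.Gamma (1 - α) with hGdef
  have hMR : (0:ℝ) < ((n+2:ℕ):ℝ) := by positivity
  have hMR2 : (2:ℝ) ≤ ((n+2:ℕ):ℝ) := by exact_mod_cast hM
  have hhpos : 0 < h := by rw [hh]; positivity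
  -- G < 0
  have h1a : (1:ℝ) - α ≠ 0 := by intro hc; linarith
  have hG2 : Real.Gamma (2-α) = (1-α) * G := by
    have := Real.Gamma_add_one h1a
    have harg : (1:ℝ) - α + 1 = 2 - α := by ring
    rwa [harg] at this
  have hG2pos : 0 < Real.Gamma (2-α) := Real.Gamma_pos_of_pos (by linarith)
  have hGneg : G < 0 := by nlinarith
  have hGne : G ≠ 0 := ne_of_lt hGneg
  set c : ℝ := 2 * ((n+2:ℕ):ℝ)^(-α) / G with hc
  set A : Matrix (Fin (n+2-1)) (Fin (n+2-1)) ℝ := Amat α (n+2) with hA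
  -- row sums
  have hrowbound : ∀ i : Fin (n+2-1), ∑ j, A i j ≤ c := by
    intro i
    rw [hA, rowsumA α n i]
    have k1 := keyrow hα1 hα2 (n+2) hM ((i:ℕ)+1) (by omega) (by omega)
    have k2 := keyrow hα1 hα2 (n+2) hM (n+1-(i:ℕ)) (by omega) (by omega)
    rw [le_div_iff_of_neg hGneg]
    rw [← hGdef] at k1 k2
    nlinarith [k1, k2]
  -- symmetry
  have hsym : ∀ i j : Fin (n+2-1), A i j = A j i := by
    intro i j
    show Bmat α (n+2) i j + Bmat α (n+2) j i = Bmat α (n+2) j i + Bmat α (n+2) i j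
    ring
  -- off-diagonal nonnegativity
  have hoff : ∀ i j : Fin (n+2-1), i ≠ j → 0 ≤ A i j := by
    intro i j hij
    have hne : (i:ℕ) ≠ (j:ℕ) := fun hc => hij (Fin.ext hc)
    show 0 ≤ (if (j:ℕ) ≤ (i:ℕ)+1 then glw α ((i:ℕ)+1-(j:ℕ)) else 0)
        + (if (i:ℕ) ≤ (j:ℕ)+1 then glw α ((j:ℕ)+1-(i:ℕ)) else 0)
    by_cases h1 : (i:ℕ)+1 = (j:ℕ)
    · rw [if_pos (by omega), if_pos (by omega),
        show (i:ℕ)+1-(j:ℕ) = 0 by omega, show (j:ℕ)+1-(i:ℕ) = 2 by omega]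
      exact glw02_nonneg hα1 hα2
    · by_cases h2 : (j:ℕ)+1 = (i:ℕ)
      · rw [if_pos (by omega), if_pos (by omega),
          show (i:ℕ)+1-(j:ℕ) = 2 by omega, show (j:ℕ)+1-(i:ℕ) = 0 by omega]
        have := glw02_nonneg hα1 hα2
        linarith
      · by_cases h3 : (j:ℕ) ≤ (i:ℕ)+1
        · rw [if_pos h3, if_neg (by omega), add_zero]
          exact glw_nonneg hα1 hα2 _ (by omega)
        · rw [if_neg h3, if_pos (by omega), zero_add]
          exact glw_nonneg hα1 hα2 _ (by omega)
  -- reduce complex quadratic form to real ones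
  have hmv : ∀ i, ((A.map (Complex.ofReal)).mulVec u) i = ∑ j, (A i j : ℂ) * u j := by
    intro i
    simp [Matrix.mulVec, dotProduct, Matrix.map_apply]
  have hre : ((h:ℂ) * ∑ i, ((A.map Complex.ofReal).mulVec u) i * (starRingEnd ℂ) (u i)).re
      = h * ∑ i, ∑ j, A i j * ((u j).re * (u i).re + (u j).im * (u i).im) := by
    have hsum : (∑ i, ((A.map Complex.ofReal).mulVec u) i * (starRingEnd ℂ) (u i))
        = ∑ i, ∑ j, (A i j : ℂ) * u j * (starRingEnd ℂ) (u i) := by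
      refine Finset.sum_congr rfl fun i _ => ?_
      rw [hmv, Finset.sum_mul]
    rw [hsum, Complex.mul_re, Complex.ofReal_re, Complex.ofReal_im]
    simp only [zero_mul, sub_zero]
    congr 1
    rw [Complex.re_sum]
    refine Finset.sum_congr rfl fun i _ => ?_
    rw [Complex.re_sum]
    refine Finset.sum_congr rfl fun j _ => ?_
    simp [Complex.mul_re, Complex.mul_im, Complex.conj_re, Complex.conj_im]
    ring
  set S2 : ℝ := ∑ i, ‖u i‖ ^ 2 with hS2
  have hS2nonneg : 0 ≤ S2 := Finset.sum_nonneg fun i _ => by positivity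
  have habs : S2 = (∑ i, (u i).re ^ 2) + (∑ i, (u i).im ^ 2) := by
    rw [hS2, ← Finset.sum_add_distrib]
    refine Finset.sum_congr rfl fun i _ => ?_
    rw [Complex.sq_norm, Complex.normSq_apply]
    ring
  have hQF : ∑ i, ∑ j, A i j * ((u j).re * (u i).re + (u j).im * (u i).im) ≤ c * S2 := by
    have hx := qf_bound A c hsym hoff hrowbound (fun i => (u i).re)
    have hy := qf_bound A c hsym hoff hrowbound (fun i => (u i).im)
    have hsplit : ∑ i, ∑ j, A i j * ((u j).re * (u i).re + (u j).im * (u i).im)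
        = (∑ i, ∑ j, A i j * (u i).re * (u j).re)
          + (∑ i, ∑ j, A i j * (u i).im * (u j).im) := by
      rw [← Finset.sum_add_distrib]
      refine Finset.sum_congr rfl fun i _ => ?_
      rw [← Finset.sum_add_distrib]
      refine Finset.sum_congr rfl fun j _ => ?_
      ring
    rw [hsplit, habs]
    calc (∑ i, ∑ j, A i j * (u i).re * (u j).re) + (∑ i, ∑ j, A i j * (u i).im * (u j).im)
        ≤ c * (∑ i, (u i).re ^ 2) + c * (∑ i, (u i).im ^ 2) := add_le_add hx hy
      _ = c * ((∑ i, (u i).re ^ 2) + (∑ i, (u i).im ^ 2)) := by ring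
  -- final arithmetic
  have hbpow : b ^ α = h ^ α * ((n+2:ℕ):ℝ) ^ α := by
    have hbeq : b = h * ((n+2:ℕ):ℝ) := by
      rw [hh]; field_simp
    rw [hbeq, Real.mul_rpow hhpos.le hMR.le]
  have hhapos : (0:ℝ) < h ^ α := Real.rpow_pos_of_pos hhpos _
  have hMapos : (0:ℝ) < ((n+2:ℕ):ℝ) ^ α := Real.rpow_pos_of_pos hMR _
  have hMneg : ((n+2:ℕ):ℝ) ^ (-α) = (((n+2:ℕ):ℝ) ^ α)⁻¹ := Real.rpow_neg hMR.le _
  have hh1 : h ^ α ≠ 0 := ne_of_gt hhapos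
  have hM1 : ((n+2:ℕ):ℝ) ^ α ≠ 0 := ne_of_gt hMapos
  constructor
  · rw [hre]
    have heq : -(2 / (b ^ α * G)) * (h * S2) = -(1 / h ^ α) * (h * (c * S2)) := by
      rw [hc, hbpow, hMneg]
      field_simp
    rw [heq]
    exact mul_le_mul_of_nonpos_left (mul_le_mul_of_nonneg_left hQF hhpos.le)
      (neg_nonpos.mpr (by positivity))
  · intro hu
    have hex : ∃ i, u i ≠ 0 := by
      by_contra hcon
      push_neg at hcon
      exact hu (funext hcon)
    obtain ⟨i0, hi0⟩ := hex
    have hS2pos : 0 < S2 := by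
      rw [hS2]
      refine Finset.sum_pos' (fun i _ => by positivity) ⟨i0, Finset.mem_univ _, ?_⟩
      exact pow_pos (norm_pos_iff.mpr hi0) 2
    have hcoef : 0 < -(2 / (b ^ α * G)) := by
      have hbG : b ^ α * G < 0 :=
        mul_neg_of_pos_of_neg (Real.rpow_pos_of_pos hb _) hGneg
      have : 2 / (b ^ α * G) < 0 := div_neg_of_pos_of_neg two_pos hbG
      linarith
    exact mul_pos hcoef (by positivity)
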